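/- Let (A, K) be a pair over a commutative ring k. Then the full subcategory of (A, K)-modules inside weak (A, K)-modules is both reflective and coreflective: the inclusion functor J admits a left adjoint M ↦ M_𝔨 = M/N, where N is the dg submodule generated by ω(ξ)m for ξ ∈ 𝔨, m ∈ M and ω(ξ) = dν(ξ) − π(ψ(ξ)), and a right adjoint M ↦ M^𝔨 = {m ∈ M : ω(ξ)m = 0 for all ξ ∈ 𝔨}. -/

import Mathlib

/-!
STATEMENT 7: Let `(A, K)` be a pair over a commutative ring `k`.  The full
subcategory of `(A, K)`-modules inside weak `(A, K)`-modules is both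
reflective and coreflective: the inclusion functor `J` admits a left adjoint
`M ↦ M_𝔨 = M/N` (where `N` is the dg submodule generated by the `ω(ξ)m`,
`ω(ξ) = dν(ξ) − π(ψ(ξ))`) and a right adjoint
`M ↦ M^𝔨 = {m : ω(ξ)m = 0 for all ξ}`.

Formalization: pairs are modeled by the data `HCPair`: a group `G` (the points
of the flat affine group scheme `K`) with Lie algebra `𝔨 = D.L` and adjoint
action, a `K`-equivariant `k`-algebra `A` (a dg algebra concentrated in
degree 0) with the induced infinitesimal action `dφ(ξ) = [ψ(ξ), −]`, and the
equivariant Lie algebra map `ψ : 𝔨 → A`.  A weak `(A, K)`-module is a cochain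
complex of `k`-modules with commuting equivariant actions `π` of `A`, `ν` of
`K`, together with the derived action `dν` of `𝔨` (which, for an algebraic
group, is determined by `ν`); it is an `(A, K)`-module (`IsStrict`) when
`π(ψ(ξ)) = dν(ξ)`.  The statement: the inclusion of the full subcategory of
`(A,K)`-modules admits a left adjoint (`Functor.IsRightAdjoint`) and a right
adjoint (`Functor.IsLeftAdjoint`).
-/

open CategoryTheory
set_option synthInstance.maxHeartbeats 1000000
set_option maxHeartbeats 1600000

variable (k : Type) [CommRing k]

structure GroupData where
  G : Type
  [grp : Group G]
  L : Type
  [addL : AddCommGroup L]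
  [modL : Module k L]
  [lieL : LieRing L]
  [lieAlgL : LieAlgebra k L]
  Ad : G →* (L ≃ₗ[k] L)
  ad_bracket : ∀ (g : G) (x y : L), Ad g ⁅x, y⁆ = ⁅Ad g x, Ad g y⁆

attribute [instance] GroupData.grp GroupData.addL GroupData.modL GroupData.lieL GroupData.lieAlgL

variable {k}

structure WeakPair (D : GroupData k) where
  A : Type
  [ringA : Ring A]
  [algA : Algebra k A]
  φ : D.G →* (A ≃ₐ[k] A)
  dφ : D.L →ₗ[k] (A →ₗ[k] A)
  dφ_lie : ∀ x y : D.L, dφ ⁅x, y⁆ = dφ x ∘ₗ dφ y - dφ y ∘ₗ dφ x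
  dφ_der : ∀ (ξ : D.L) (a b : A), dφ ξ (a * b) = dφ ξ a * b + a * dφ ξ b
  dφ_equiv : ∀ (g : D.G) (ξ : D.L) (a : A), φ g (dφ ξ a) = dφ (D.Ad g ξ) (φ g a)

attribute [instance] WeakPair.ringA WeakPair.algA

structure HCPair (D : GroupData k) extends WeakPair D where
  ψ : D.L →ₗ[k] A
  ψ_bracket : ∀ x y : D.L, ψ ⁅x, y⁆ = ψ x * ψ y - ψ y * ψ x
  ψ_equiv : ∀ (g : D.G) (ξ : D.L), φ g (ψ ξ) = ψ (D.Ad g ξ)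
  dφ_eq : ∀ (ξ : D.L) (a : A), dφ ξ a = ψ ξ * a - a * ψ ξ

variable {D : GroupData k}

structure WeakMod (P : WeakPair D) where
  M : CochainComplex (ModuleCat.{0} k) ℤ
  π : P.A →ₐ[k] End M
  ν : D.G →* (End M)ˣ
  dν : D.L →ₗ[k] End M
  dν_lie : ∀ x y : D.L, dν ⁅x, y⁆ = dν x * dν y - dν y * dν x
  π_equiv : ∀ (g : D.G) (a : P.A), (ν g : End M) * π a = π (P.φ g a) * (ν g : End M)
  dν_equiv : ∀ (g : D.G) (ξ : D.L), (ν g : End M) * dν ξ = dν (D.Ad g ξ) * (ν g : End M)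
  dν_π : ∀ (ξ : D.L) (a : P.A), dν ξ * π a = π (P.dφ ξ a) + π a * dν ξ

namespace WeakMod

variable {P : WeakPair D}

@[ext]
structure Hom (V W : WeakMod P) where
  hom : V.M ⟶ W.M
  comm_π : ∀ a : P.A, (V.π a : V.M ⟶ V.M) ≫ hom = hom ≫ (W.π a : W.M ⟶ W.M)
  comm_ν : ∀ g : D.G, ((V.ν g : End V.M) : V.M ⟶ V.M) ≫ hom
    = hom ≫ ((W.ν g : End W.M) : W.M ⟶ W.M)
  comm_dν : ∀ ξ : D.L, (V.dν ξ : V.M ⟶ V.M) ≫ hom = hom ≫ (W.dν ξ : W.M ⟶ W.M)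

instance : Category (WeakMod P) where
  Hom := Hom
  id V := ⟨𝟙 V.M, by simp, by simp, by simp⟩
  comp f g := ⟨f.hom ≫ g.hom,
    fun a => by rw [← Category.assoc, f.comm_π, Category.assoc, g.comm_π, Category.assoc],
    fun a => by rw [← Category.assoc, f.comm_ν, Category.assoc, g.comm_ν, Category.assoc],
    fun a => by rw [← Category.assoc, f.comm_dν, Category.assoc, g.comm_dν, Category.assoc]⟩
  id_comp f := Hom.ext (by simp)
  comp_id f := Hom.ext (by simp)
  assoc f g h := Hom.ext (by simp)

/-- The forgetful functor to cochain complexes of `k`-modules. -/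
def forgetToComplex (P : WeakPair D) : WeakMod P ⥤ CochainComplex (ModuleCat.{0} k) ℤ where
  obj V := V.M
  map f := f.hom

end WeakMod

/-- An `(A,K)`-module is a weak `(A,K)`-module on which the two actions of `𝔨`
agree: `dν(ξ) = π(ψ(ξ))`. -/
def IsStrict (P : HCPair D) (V : WeakMod P.toWeakPair) : Prop :=
  ∀ ξ : D.L, V.dν ξ = V.π (P.ψ ξ)

namespace St7
open CategoryTheory

variable {k : Type} [CommRing k] {D : GroupData k} (P : HCPair D) (V : WeakMod P.toWeakPair)

/-- The obstruction operator `ω(ξ) = dν(ξ) − π(ψ(ξ))`. -/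
def ω (ξ : D.L) : End V.M := V.dν ξ - V.π (P.ψ ξ)

lemma pi_omega (a : P.A) (ξ : D.L) :
    (V.π a : End V.M) * ω P V ξ = ω P V ξ * (V.π a : End V.M) := by
  have h1 := V.dν_π ξ a
  have h2 := P.dφ_eq ξ a
  rw [h2, map_sub, map_mul, map_mul] at h1
  unfold ω
  rw [mul_sub, sub_mul]
  have : (V.π a : End V.M) * V.dν ξ
      = V.dν ξ * V.π a - (V.π (P.ψ ξ) * V.π a - V.π a * V.π (P.ψ ξ)) := by
    rw [h1]; abel
  rw [this, ← map_mul, ← map_mul]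
  abel

lemma nu_omega (g : D.G) (ξ : D.L) :
    ((V.ν g : End V.M)) * ω P V ξ = ω P V (D.Ad g ξ) * (V.ν g : End V.M) := by
  unfold ω
  rw [mul_sub, sub_mul, V.dν_equiv g ξ, V.π_equiv g (P.ψ ξ), P.ψ_equiv g ξ]

lemma dnu_omega (η ξ : D.L) :
    V.dν η * ω P V ξ = ω P V ξ * V.dν η + ω P V ⁅η, ξ⁆ := by
  have h1 := V.dν_π η (P.ψ ξ)
  have h2 : P.dφ η (P.ψ ξ) = P.ψ ⁅η, ξ⁆ := by
    rw [P.dφ_eq, P.ψ_bracket]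
  rw [h2] at h1
  unfold ω
  rw [mul_sub, sub_mul, h1, V.dν_lie η ξ]
  abel

lemma omega_nu (g : D.G) (ξ : D.L) :
    ω P V ξ * (V.ν g : End V.M) = (V.ν g : End V.M) * ω P V ((D.Ad g)⁻¹ ξ) := by
  have := nu_omega P V g ((D.Ad g)⁻¹ ξ)
  have hAd : D.Ad g ((D.Ad g)⁻¹ ξ) = ξ := by
    have : D.Ad g * (D.Ad g)⁻¹ = 1 := mul_inv_cancel _
    calc D.Ad g ((D.Ad g)⁻¹ ξ) = (D.Ad g * (D.Ad g)⁻¹) ξ := rfl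
    _ = ξ := by rw [this]; rfl
  rw [hAd] at this
  rw [this]

lemma omega_dnu (η ξ : D.L) :
    ω P V ξ * V.dν η = V.dν η * ω P V ξ + (-1 : End V.M) * ω P V ⁅η, ξ⁆ := by
  have h := dnu_omega P V η ξ
  have : ω P V ξ * V.dν η = V.dν η * ω P V ξ - ω P V ⁅η, ξ⁆ := by
    rw [h]; abel
  rw [this, neg_one_mul, sub_eq_add_neg]

end St7
namespace St7
variable {k : Type} [CommRing k] {D : GroupData k} (P : HCPair D) (V : WeakMod P.toWeakPair)
open CategoryTheory

/-- Pointwise form of a chain-map equality. -/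
lemma hom_congr {M N : CochainComplex (ModuleCat.{0} k) ℤ} {f g : M ⟶ N} (h : f = g)
    (n : ℤ) (x : M.X n) : f.f n x = g.f n x := by rw [h]

lemma comp_f_apply {M N Z : CochainComplex (ModuleCat.{0} k) ℤ} (f : M ⟶ N) (g : N ⟶ Z)
    (n : ℤ) (x : M.X n) : (f ≫ g).f n x = g.f n (f.f n x) := rfl

lemma mul_f_apply {M : CochainComplex (ModuleCat.{0} k) ℤ} (f g : End M)
    (n : ℤ) (x : M.X n) : (f * g).f n x = f.f n (g.f n x) := rfl

/-- The degree-`n` piece of the submodule `N` generated by the images of the `ω(ξ)`. -/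
def Nsub (n : ℤ) : Submodule k (V.M.X n) :=
  ⨆ ξ : D.L, LinearMap.range ((ω P V ξ).f n).hom

lemma omega_mem {n : ℤ} (ξ : D.L) (x : V.M.X n) : (ω P V ξ).f n x ∈ Nsub P V n :=
  le_iSup (fun ξ : D.L => LinearMap.range ((ω P V ξ).f n).hom) ξ ⟨x, rfl⟩

lemma Nsub_le {n : ℤ} {q : Submodule k (V.M.X n)}
    (h : ∀ (ξ : D.L) (x : V.M.X n), (ω P V ξ).f n x ∈ q) : Nsub P V n ≤ q :=
  iSup_le fun ξ y hy => by obtain ⟨x, rfl⟩ := hy; exact h ξ x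

/-- Stability of `Nsub` under an endomorphism satisfying a commutation identity. -/
lemma Nsub_stable (e : End V.M)
    (H : ∀ ξ : D.L, ∃ (η η' : D.L) (u v : End V.M),
      e * ω P V ξ = ω P V η * u + ω P V η' * v) (n : ℤ) {x : V.M.X n}
    (hx : x ∈ Nsub P V n) : e.f n x ∈ Nsub P V n := by
  revert x
  have : Nsub P V n ≤ (Nsub P V n).comap (e.f n).hom := by
    apply Nsub_le
    intro ξ x
    obtain ⟨η, η', u, v, he⟩ := H ξ
    have hx := hom_congr he n x
    rw [mul_f_apply] at hx
    rw [HomologicalComplex.add_f_apply] at hx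
    simp only [Submodule.mem_comap]
    show (e.f n) ((ω P V ξ).f n x) ∈ Nsub P V n
    rw [hx]
    exact add_mem (by rw [mul_f_apply]; exact omega_mem P V η _)
      (by rw [mul_f_apply]; exact omega_mem P V η' _)
  exact fun x hx => this hx

/-- Stability predicate: `e` preserves the subcomplex `N`. -/
def Stab (e : End V.M) : Prop := ∀ (n : ℤ) (x : V.M.X n), x ∈ Nsub P V n → e.f n x ∈ Nsub P V n

lemma stab_pi (a : P.A) : Stab P V (V.π a : End V.M) := fun n x hx =>
  Nsub_stable P V _ (fun ξ => ⟨ξ, ξ, V.π a, 0, by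
    rw [pi_omega, mul_zero, add_zero]⟩) n hx

lemma stab_nu (g : D.G) : Stab P V ((V.ν g : End V.M)) := fun n x hx =>
  Nsub_stable P V _ (fun ξ => ⟨D.Ad g ξ, ξ, (V.ν g : End V.M), 0, by
    rw [nu_omega, mul_zero, add_zero]⟩) n hx

lemma stab_dnu (η : D.L) : Stab P V (V.dν η) := fun n x hx =>
  Nsub_stable P V _ (fun ξ => ⟨ξ, ⁅η, ξ⁆, V.dν η, 1, by
    rw [dnu_omega, mul_one]⟩) n hx

lemma stab_one : Stab P V 1 := fun n x hx => hx

lemma stab_mul {e₁ e₂ : End V.M} (h₁ : Stab P V e₁) (h₂ : Stab P V e₂) :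
    Stab P V (e₁ * e₂) := fun n x hx => by
  rw [mul_f_apply]; exact h₁ n _ (h₂ n x hx)

lemma stab_add {e₁ e₂ : End V.M} (h₁ : Stab P V e₁) (h₂ : Stab P V e₂) :
    Stab P V (e₁ + e₂) := fun n x hx => by
  rw [HomologicalComplex.add_f_apply]; exact add_mem (h₁ n x hx) (h₂ n x hx)

lemma stab_sub {e₁ e₂ : End V.M} (h₁ : Stab P V e₁) (h₂ : Stab P V e₂) :
    Stab P V (e₁ - e₂) := fun n x hx => by
  rw [HomologicalComplex.sub_f_apply]
  exact sub_mem (h₁ n x hx) (h₂ n x hx)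

lemma stab_smul (c : k) {e : End V.M} (h : Stab P V e) : Stab P V (c • e) := fun n x hx => by
  rw [HomologicalComplex.smul_f_apply]
  exact Submodule.smul_mem _ c (h n x hx)

lemma Nsub_d (i j : ℤ) : Nsub P V i ≤ (Nsub P V j).comap (V.M.d i j).hom := by
  apply Nsub_le
  intro ξ x
  have h := (ω P V ξ).comm i j
  have hx : (V.M.d i j).hom ((ω P V ξ).f i x) = (ω P V ξ).f j (V.M.d i j x) :=
    ConcreteCategory.congr_hom h x
  simp only [Submodule.mem_comap]
  rw [hx]
  exact omega_mem P V ξ _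

end St7
namespace St7
variable {k : Type} [CommRing k] {D : GroupData k} (P : HCPair D) (V : WeakMod P.toWeakPair)
open CategoryTheory

/-- The quotient complex `M/N`. -/
def Q : CochainComplex (ModuleCat.{0} k) ℤ where
  X n := ModuleCat.of k (V.M.X n ⧸ Nsub P V n)
  d i j := ModuleCat.ofHom (Submodule.mapQ _ _ (V.M.d i j).hom (Nsub_d P V i j))
  shape i j h := by
    apply ModuleCat.hom_ext
    apply Submodule.linearMap_qext
    ext x
    show (Submodule.Quotient.mk (V.M.d i j x) : _ ⧸ Nsub P V j) = 0
    rw [V.M.shape i j h]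
    rfl
  d_comp_d' i j l _ _ := by
    apply ModuleCat.hom_ext
    apply Submodule.linearMap_qext
    ext x
    have h0 : V.M.d j l (V.M.d i j x) = 0 :=
      ConcreteCategory.congr_hom (V.M.d_comp_d i j l) x
    show (Submodule.Quotient.mk (V.M.d j l (V.M.d i j x)) : _ ⧸ Nsub P V l) = 0
    rw [h0]
    exact (Submodule.Quotient.mk_eq_zero _).mpr (zero_mem _)

/-- The projection chain map `M ⟶ M/N`. -/
def quotHom : V.M ⟶ Q P V where
  f n := ModuleCat.ofHom (Nsub P V n).mkQ
  comm' i j _ := by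
    ext x
    show Submodule.mapQ _ _ (V.M.d i j).hom (Nsub_d P V i j) (Submodule.Quotient.mk x)
      = Submodule.Quotient.mk (V.M.d i j x)
    rw [Submodule.mapQ_apply]

lemma quotHom_f_apply (n : ℤ) (x : V.M.X n) :
    (quotHom P V).f n x = Submodule.Quotient.mk x := rfl

lemma quot_epi {Z : CochainComplex (ModuleCat.{0} k) ℤ} {f g : Q P V ⟶ Z}
    (h : quotHom P V ≫ f = quotHom P V ≫ g) : f = g := by
  apply HomologicalComplex.hom_f_injective
  funext n
  apply ModuleCat.hom_ext
  apply Submodule.linearMap_qext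
  ext x
  exact ConcreteCategory.congr_hom (congrArg (fun φ => HomologicalComplex.Hom.f φ n) h) x

/-- Descend a chain map killing `N` to the quotient. -/
def qlift {Z : CochainComplex (ModuleCat.{0} k) ℤ} (f : V.M ⟶ Z)
    (h : ∀ (n : ℤ) (x : V.M.X n), x ∈ Nsub P V n → f.f n x = 0) : Q P V ⟶ Z where
  f n := ModuleCat.ofHom ((Nsub P V n).liftQ (f.f n).hom (fun x hx => h n x hx))
  comm' i j _ := by
    apply ModuleCat.hom_ext
    apply Submodule.linearMap_qext
    ext x
    have hc : Z.d i j (f.f i x) = f.f j (V.M.d i j x) := ConcreteCategory.congr_hom (f.comm i j) x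
    exact hc

lemma qlift_fac {Z : CochainComplex (ModuleCat.{0} k) ℤ} (f : V.M ⟶ Z)
    (h : ∀ (n : ℤ) (x : V.M.X n), x ∈ Nsub P V n → f.f n x = 0) :
    quotHom P V ≫ qlift P V f h = f := by
  apply HomologicalComplex.hom_f_injective
  funext n
  ext x
  rfl

/-- The induced endomorphism of the quotient. -/
def qend (e : End V.M) (h : Stab P V e) : End (Q P V) :=
  qlift P V ((e : V.M ⟶ V.M) ≫ quotHom P V)
    (fun n x hx => (Submodule.Quotient.mk_eq_zero _).mpr (h n x hx))

lemma qend_fac (e : End V.M) (h : Stab P V e) :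
    quotHom P V ≫ (qend P V e h : Q P V ⟶ Q P V) = (e : V.M ⟶ V.M) ≫ quotHom P V :=
  qlift_fac P V _ _

lemma qend_fac_assoc {Z : CochainComplex (ModuleCat.{0} k) ℤ} (e : End V.M) (h : Stab P V e)
    (t : Q P V ⟶ Z) :
    quotHom P V ≫ (qend P V e h : Q P V ⟶ Q P V) ≫ t
      = (e : V.M ⟶ V.M) ≫ quotHom P V ≫ t := by
  rw [← Category.assoc, qend_fac, Category.assoc]

lemma qend_unique (e : End V.M) (h : Stab P V e) (t : End (Q P V))
    (ht : quotHom P V ≫ (t : Q P V ⟶ Q P V) = (e : V.M ⟶ V.M) ≫ quotHom P V) :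
    qend P V e h = t :=
  quot_epi P V (by rw [qend_fac, ht])

lemma qend_congr {e₁ e₂ : End V.M} {h₁ : Stab P V e₁} {h₂ : Stab P V e₂} (h : e₁ = e₂) :
    qend P V e₁ h₁ = qend P V e₂ h₂ := by subst h; rfl

lemma qend_one : qend P V 1 (stab_one P V) = 1 :=
  qend_unique P V _ _ _ (by
    show quotHom P V ≫ 𝟙 (Q P V) = 𝟙 V.M ≫ quotHom P V
    simp)

lemma qend_mul {e₁ e₂ : End V.M} (h₁ : Stab P V e₁) (h₂ : Stab P V e₂) :
    qend P V (e₁ * e₂) (stab_mul P V h₁ h₂) = qend P V e₁ h₁ * qend P V e₂ h₂ :=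
  qend_unique P V _ _ _ (by
    show quotHom P V ≫ ((qend P V e₂ h₂ : Q P V ⟶ Q P V) ≫ qend P V e₁ h₁)
      = ((e₂ : V.M ⟶ V.M) ≫ e₁) ≫ quotHom P V
    rw [← Category.assoc, qend_fac, Category.assoc, qend_fac, ← Category.assoc])

lemma qend_add {e₁ e₂ : End V.M} (h₁ : Stab P V e₁) (h₂ : Stab P V e₂) :
    qend P V (e₁ + e₂) (stab_add P V h₁ h₂) = qend P V e₁ h₁ + qend P V e₂ h₂ :=
  qend_unique P V _ _ _ (by
    show quotHom P V ≫ ((qend P V e₁ h₁ : Q P V ⟶ Q P V) + qend P V e₂ h₂)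
      = ((e₁ : V.M ⟶ V.M) + e₂) ≫ quotHom P V
    rw [Preadditive.comp_add, Preadditive.add_comp, qend_fac, qend_fac])

lemma qend_sub {e₁ e₂ : End V.M} (h₁ : Stab P V e₁) (h₂ : Stab P V e₂) :
    qend P V (e₁ - e₂) (stab_sub P V h₁ h₂) = qend P V e₁ h₁ - qend P V e₂ h₂ :=
  qend_unique P V _ _ _ (by
    show quotHom P V ≫ ((qend P V e₁ h₁ : Q P V ⟶ Q P V) - qend P V e₂ h₂)
      = ((e₁ : V.M ⟶ V.M) - e₂) ≫ quotHom P V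
    rw [Preadditive.comp_sub, Preadditive.sub_comp, qend_fac, qend_fac])

lemma qend_smul (c : k) {e : End V.M} (h : Stab P V e) :
    qend P V (c • e) (stab_smul P V c h) = c • qend P V e h :=
  qend_unique P V _ _ _ (by
    show quotHom P V ≫ (c • (qend P V e h : Q P V ⟶ Q P V))
      = (c • (e : V.M ⟶ V.M)) ≫ quotHom P V
    rw [Linear.comp_smul, Linear.smul_comp, qend_fac])

lemma stab_omega (ξ : D.L) : Stab P V (ω P V ξ) :=
  stab_sub P V (stab_dnu P V ξ) (stab_pi P V (P.ψ ξ))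

lemma qend_omega (ξ : D.L) : qend P V (ω P V ξ) (stab_omega P V ξ) = 0 :=
  qend_unique P V _ _ _ (by
    show quotHom P V ≫ (0 : Q P V ⟶ Q P V) = (ω P V ξ : V.M ⟶ V.M) ≫ quotHom P V
    rw [Limits.comp_zero]
    apply HomologicalComplex.hom_f_injective
    funext n
    ext x
    exact ((Submodule.Quotient.mk_eq_zero _).mpr (omega_mem P V ξ x)).symm)

end St7
namespace St7
variable {k : Type} [CommRing k] {D : GroupData k} (P : HCPair D) (V : WeakMod P.toWeakPair)
open CategoryTheory

lemma stab_zero : Stab P V 0 := fun n x _ => by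
  rw [HomologicalComplex.zero_f_apply]; exact zero_mem _

lemma qend_zero (h : Stab P V 0) : qend P V 0 h = 0 :=
  qend_unique P V _ _ _ (by
    show quotHom P V ≫ (0 : Q P V ⟶ Q P V) = (0 : V.M ⟶ V.M) ≫ quotHom P V
    rw [Limits.comp_zero, Limits.zero_comp])

/-- The quotient weak module `M/N`. -/
def quotMod : WeakMod P.toWeakPair where
  M := Q P V
  π :=
    { toFun := fun a => qend P V (V.π a) (stab_pi P V a)
      map_one' := by
        have h : qend P V (V.π 1) (stab_pi P V 1) = 1 :=
          (qend_congr P V (map_one V.π)).trans (qend_one P V)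
        exact h
      map_mul' := fun a b => by
        have h : qend P V (V.π (a * b)) (stab_pi P V (a * b))
            = qend P V (V.π a) (stab_pi P V a) * qend P V (V.π b) (stab_pi P V b) := by
          rw [← qend_mul]
          exact qend_congr P V (map_mul V.π a b)
        exact h
      map_zero' := by
        have h : qend P V (V.π 0) (stab_pi P V 0) = 0 :=
          (qend_congr P V (map_zero V.π)).trans (qend_zero P V (stab_zero P V))
        exact h
      map_add' := fun a b => by
        have h : qend P V (V.π (a + b)) (stab_pi P V (a + b))
            = qend P V (V.π a) (stab_pi P V a) + qend P V (V.π b) (stab_pi P V b) := by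
          rw [← qend_add]
          exact qend_congr P V (map_add V.π a b)
        exact h
      commutes' := fun c => by
        have h1 : (V.π (algebraMap k P.A c) : End V.M) = c • (1 : End V.M) := by
          rw [AlgHom.commutes, Algebra.algebraMap_eq_smul_one]
        have h : qend P V (V.π (algebraMap k P.A c)) (stab_pi P V (algebraMap k P.A c))
            = algebraMap k (End (Q P V)) c := by
          calc qend P V (V.π (algebraMap k P.A c)) (stab_pi P V (algebraMap k P.A c))
              = qend P V (c • (1 : End V.M)) (stab_smul P V c (stab_one P V)) :=
                qend_congr P V h1
            _ = c • qend P V 1 (stab_one P V) := qend_smul P V c (stab_one P V)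
            _ = c • (1 : End (Q P V)) := by rw [qend_one]
            _ = algebraMap k (End (Q P V)) c := (Algebra.algebraMap_eq_smul_one c).symm
        exact h }
  ν :=
    { toFun := fun g =>
        { val := qend P V ((V.ν g : End V.M)) (stab_nu P V g)
          inv := qend P V ((V.ν g⁻¹ : End V.M)) (stab_nu P V g⁻¹)
          val_inv := by
            rw [← qend_mul]
            exact (qend_congr P V (by
              rw [← Units.val_mul, ← map_mul, mul_inv_cancel, map_one, Units.val_one])).trans
              (qend_one P V)
          inv_val := by
            rw [← qend_mul]
            exact (qend_congr P V (by
              rw [← Units.val_mul, ← map_mul, inv_mul_cancel, map_one, Units.val_one])).trans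
              (qend_one P V) }
      map_one' := by
        apply Units.ext
        show qend P V ((V.ν (1 : D.G) : End V.M)) (stab_nu P V 1) = (1 : End (Q P V))
        exact (qend_congr P V (by rw [map_one, Units.val_one])).trans (qend_one P V)
      map_mul' := fun g h => by
        apply Units.ext
        show qend P V ((V.ν (g * h) : End V.M)) (stab_nu P V (g * h))
          = qend P V ((V.ν g : End V.M)) (stab_nu P V g)
            * qend P V ((V.ν h : End V.M)) (stab_nu P V h)
        rw [← qend_mul]
        exact qend_congr P V (by rw [map_mul, Units.val_mul]) }
  dν :=
    { toFun := fun ξ => qend P V (V.dν ξ) (stab_dnu P V ξ)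
      map_add' := fun ξ η => by
        have h : qend P V (V.dν (ξ + η)) (stab_dnu P V (ξ + η))
            = qend P V (V.dν ξ) (stab_dnu P V ξ) + qend P V (V.dν η) (stab_dnu P V η) := by
          rw [← qend_add]
          exact qend_congr P V (map_add V.dν ξ η)
        exact h
      map_smul' := fun c ξ => by
        have h : qend P V (V.dν (c • ξ)) (stab_dnu P V (c • ξ))
            = c • qend P V (V.dν ξ) (stab_dnu P V ξ) := by
          rw [← qend_smul]
          exact qend_congr P V (map_smul V.dν c ξ)
        exact h }
  dν_lie := fun x y => by
    have h : qend P V (V.dν ⁅x, y⁆) (stab_dnu P V ⁅x, y⁆)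
        = qend P V (V.dν x) (stab_dnu P V x) * qend P V (V.dν y) (stab_dnu P V y)
          - qend P V (V.dν y) (stab_dnu P V y) * qend P V (V.dν x) (stab_dnu P V x) := by
      rw [← qend_mul, ← qend_mul, ← qend_sub]
      exact qend_congr P V (V.dν_lie x y)
    exact h
  π_equiv := fun g a => by
    have h : qend P V ((V.ν g : End V.M)) (stab_nu P V g) * qend P V (V.π a) (stab_pi P V a)
        = qend P V (V.π (P.φ g a)) (stab_pi P V (P.φ g a))
          * qend P V ((V.ν g : End V.M)) (stab_nu P V g) := by
      rw [← qend_mul, ← qend_mul]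
      exact qend_congr P V (V.π_equiv g a)
    exact h
  dν_equiv := fun g ξ => by
    have h : qend P V ((V.ν g : End V.M)) (stab_nu P V g) * qend P V (V.dν ξ) (stab_dnu P V ξ)
        = qend P V (V.dν (D.Ad g ξ)) (stab_dnu P V (D.Ad g ξ))
          * qend P V ((V.ν g : End V.M)) (stab_nu P V g) := by
      rw [← qend_mul, ← qend_mul]
      exact qend_congr P V (V.dν_equiv g ξ)
    exact h
  dν_π := fun ξ a => by
    have h : qend P V (V.dν ξ) (stab_dnu P V ξ) * qend P V (V.π a) (stab_pi P V a)
        = qend P V (V.π (P.dφ ξ a)) (stab_pi P V (P.dφ ξ a))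
          + qend P V (V.π a) (stab_pi P V a) * qend P V (V.dν ξ) (stab_dnu P V ξ) := by
      rw [← qend_mul, ← qend_mul, ← qend_add]
      exact qend_congr P V (V.dν_π ξ a)
    exact h

lemma quot_strict : IsStrict P (quotMod P V) := fun ξ => by
  have h2 : qend P V (V.dν ξ) (stab_dnu P V ξ)
      - qend P V (V.π (P.ψ ξ)) (stab_pi P V (P.ψ ξ)) = 0 :=
    ((qend_sub P V (stab_dnu P V ξ) (stab_pi P V (P.ψ ξ))).symm).trans (qend_omega P V ξ)
  have h : qend P V (V.dν ξ) (stab_dnu P V ξ)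
      = qend P V (V.π (P.ψ ξ)) (stab_pi P V (P.ψ ξ)) := sub_eq_zero.mp h2
  exact h

/-- The unit morphism `V ⟶ V/N` as a morphism of weak modules. -/
def quotUnit : WeakMod.Hom V (quotMod P V) where
  hom := quotHom P V
  comm_π a := (qend_fac P V (V.π a) (stab_pi P V a)).symm
  comm_ν g := (qend_fac P V ((V.ν g : End V.M)) (stab_nu P V g)).symm
  comm_dν ξ := (qend_fac P V (V.dν ξ) (stab_dnu P V ξ)).symm

lemma qlift_fac_assoc {Z W : CochainComplex (ModuleCat.{0} k) ℤ} (f : V.M ⟶ Z)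
    (h : ∀ (n : ℤ) (x : V.M.X n), x ∈ Nsub P V n → f.f n x = 0) (t : Z ⟶ W) :
    quotHom P V ≫ qlift P V f h ≫ t = f ≫ t := by
  rw [← Category.assoc, qlift_fac]

lemma hom_omega {S : WeakMod P.toWeakPair} (f : WeakMod.Hom V S) (ξ : D.L) :
    (ω P V ξ : V.M ⟶ V.M) ≫ f.hom = f.hom ≫ (ω P S ξ : S.M ⟶ S.M) := by
  show ((V.dν ξ - V.π (P.ψ ξ) : End V.M) : V.M ⟶ V.M) ≫ f.hom
    = f.hom ≫ ((S.dν ξ - S.π (P.ψ ξ) : End S.M) : S.M ⟶ S.M)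
  rw [Preadditive.sub_comp, Preadditive.comp_sub, f.comm_dν, f.comm_π]

lemma strict_omega {S : WeakMod P.toWeakPair} (hS : IsStrict P S) (ξ : D.L) :
    ω P S ξ = 0 := by
  unfold ω; rw [hS ξ]; exact sub_self _

lemma hom_kills {S : WeakMod P.toWeakPair} (hS : IsStrict P S) (f : WeakMod.Hom V S)
    (n : ℤ) (x : V.M.X n) (hx : x ∈ Nsub P V n) : f.hom.f n x = 0 := by
  refine Nsub_le P V (q := LinearMap.ker (f.hom.f n).hom) ?_ hx
  intro ξ y
  rw [LinearMap.mem_ker]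
  have h : f.hom.f n ((ω P V ξ).f n y) = (ω P S ξ).f n (f.hom.f n y) :=
    hom_congr (hom_omega P V f ξ) n y
  rw [h, strict_omega P hS ξ, HomologicalComplex.zero_f_apply]
  rfl

/-- Descend a morphism to a strict module through the quotient. -/
def qdescHom {S : WeakMod P.toWeakPair} (hS : IsStrict P S) (f : WeakMod.Hom V S) :
    WeakMod.Hom (quotMod P V) S where
  hom := qlift P V f.hom (hom_kills P V hS f)
  comm_π a := by
    have h : quotHom P V ≫ (qend P V (V.π a) (stab_pi P V a)
          ≫ qlift P V f.hom (hom_kills P V hS f))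
        = quotHom P V ≫ (qlift P V f.hom (hom_kills P V hS f) ≫ (S.π a : S.M ⟶ S.M)) := by
      rw [qend_fac_assoc, qlift_fac, f.comm_π, qlift_fac_assoc]
    exact quot_epi P V h
  comm_ν g := by
    have h : quotHom P V ≫ (qend P V ((V.ν g : End V.M)) (stab_nu P V g)
          ≫ qlift P V f.hom (hom_kills P V hS f))
        = quotHom P V ≫ (qlift P V f.hom (hom_kills P V hS f)
            ≫ ((S.ν g : End S.M) : S.M ⟶ S.M)) := by
      rw [qend_fac_assoc, qlift_fac, f.comm_ν, qlift_fac_assoc]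
    exact quot_epi P V h
  comm_dν ξ := by
    have h : quotHom P V ≫ (qend P V (V.dν ξ) (stab_dnu P V ξ)
          ≫ qlift P V f.hom (hom_kills P V hS f))
        = quotHom P V ≫ (qlift P V f.hom (hom_kills P V hS f) ≫ (S.dν ξ : S.M ⟶ S.M)) := by
      rw [qend_fac_assoc, qlift_fac, f.comm_dν, qlift_fac_assoc]
    exact quot_epi P V h

@[simp] lemma comp_hom {A B C : WeakMod P.toWeakPair} (f : A ⟶ B) (g : B ⟶ C) :
    (f ≫ g).hom = f.hom ≫ g.hom := rfl

@[simp] lemma quotUnit_hom : (quotUnit P V).hom = quotHom P V := rfl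

@[simp] lemma qdescHom_hom {S : WeakMod P.toWeakPair} (hS : IsStrict P S) (f : WeakMod.Hom V S) :
    (qdescHom P V hS f).hom = qlift P V f.hom (hom_kills P V hS f) := rfl

/-- Hom equivalence exhibiting the quotient as left adjoint to inclusion. -/
def leftEquiv (S : ObjectProperty.FullSubcategory (IsStrict P)) :
    ((⟨quotMod P V, quot_strict P V⟩ : ObjectProperty.FullSubcategory (IsStrict P)) ⟶ S)
      ≃ (V ⟶ (ObjectProperty.ι (IsStrict P)).obj S) where
  toFun g := (quotUnit P V : V ⟶ quotMod P V) ≫ g.hom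
  invFun f := ObjectProperty.homMk (qdescHom P V S.property f)
  left_inv g := by
    refine InducedCategory.hom_ext (WeakMod.Hom.ext ?_)
    simp only [ObjectProperty.homMk_hom, qdescHom_hom, comp_hom, quotUnit_hom]
    refine quot_epi P V ?_
    rw [qlift_fac]
    rfl
  right_inv f := by
    refine WeakMod.Hom.ext ?_
    rw [comp_hom, quotUnit_hom, ObjectProperty.homMk_hom, qdescHom_hom]
    exact qlift_fac P V _ _

lemma left_adjoint_exists :
    (ObjectProperty.ι (IsStrict P)).IsRightAdjoint := by
  have adj := Adjunction.adjunctionOfEquivLeft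
    (G := ObjectProperty.ι (IsStrict P))
    (F_obj := fun V => (⟨quotMod P V, quot_strict P V⟩ : ObjectProperty.FullSubcategory (IsStrict P)))
    (fun V S => leftEquiv P V S)
    (fun V S S' g h => by
      refine WeakMod.Hom.ext ?_
      exact (Category.assoc (quotUnit P V).hom h.hom.hom g.hom.hom).symm)
  exact adj.isRightAdjoint

end St7

namespace St7
variable {k : Type} [CommRing k] {D : GroupData k} (P : HCPair D) (V : WeakMod P.toWeakPair)
open CategoryTheory

/-- The degree-`n` piece of the invariants `M^𝔨`. -/
def Isub (n : ℤ) : Submodule k (V.M.X n) :=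
  ⨅ ξ : D.L, LinearMap.ker ((ω P V ξ).f n).hom

lemma Isub_mem {n : ℤ} {x : V.M.X n} :
    x ∈ Isub P V n ↔ ∀ ξ : D.L, (ω P V ξ).f n x = 0 := by
  simp [Isub, Submodule.mem_iInf, LinearMap.mem_ker]

lemma Isub_d (i j : ℤ) : ∀ x ∈ Isub P V i, V.M.d i j x ∈ Isub P V j := by
  intro x hx
  rw [Isub_mem] at hx ⊢
  intro ξ
  have h : V.M.d i j ((ω P V ξ).f i x) = (ω P V ξ).f j (V.M.d i j x) :=
    ConcreteCategory.congr_hom ((ω P V ξ).comm i j) x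
  rw [← h, hx ξ, map_zero]

/-- Stability of the invariants under suitable endomorphisms. -/
lemma Isub_stable (e : End V.M)
    (H : ∀ ξ : D.L, ∃ (η η' : D.L) (u v : End V.M),
      ω P V ξ * e = u * ω P V η + v * ω P V η') (n : ℤ) {x : V.M.X n}
    (hx : x ∈ Isub P V n) : e.f n x ∈ Isub P V n := by
  rw [Isub_mem] at hx ⊢
  intro ξ
  obtain ⟨η, η', u, v, he⟩ := H ξ
  have h1 : (ω P V ξ).f n (e.f n x) = (ω P V ξ * e).f n x := rfl
  rw [h1, he]
  show (u * ω P V η).f n x + (v * ω P V η').f n x = 0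
  have h2 : (u * ω P V η).f n x = u.f n ((ω P V η).f n x) := rfl
  have h3 : (v * ω P V η').f n x = v.f n ((ω P V η').f n x) := rfl
  rw [h2, h3, hx η, hx η', map_zero, map_zero, add_zero]

def IStab (e : End V.M) : Prop :=
  ∀ (n : ℤ) (x : V.M.X n), x ∈ Isub P V n → e.f n x ∈ Isub P V n

lemma istab_pi (a : P.A) : IStab P V (V.π a : End V.M) := fun n x hx =>
  Isub_stable P V _ (fun ξ => ⟨ξ, ξ, V.π a, 0, by
    rw [pi_omega, zero_mul, add_zero]⟩) n hx

lemma istab_nu (g : D.G) : IStab P V ((V.ν g : End V.M)) := fun n x hx =>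
  Isub_stable P V _ (fun ξ => ⟨(D.Ad g)⁻¹ ξ, ξ, (V.ν g : End V.M), 0, by
    rw [omega_nu, zero_mul, add_zero]⟩) n hx

lemma istab_dnu (η : D.L) : IStab P V (V.dν η) := fun n x hx =>
  Isub_stable P V _ (fun ξ => ⟨ξ, ⁅η, ξ⁆, V.dν η, -1, by rw [omega_dnu]⟩) n hx

lemma istab_one : IStab P V 1 := fun n x hx => hx

lemma istab_zero : IStab P V 0 := fun n x _ => by
  rw [HomologicalComplex.zero_f_apply]; exact zero_mem _

lemma istab_mul {e₁ e₂ : End V.M} (h₁ : IStab P V e₁) (h₂ : IStab P V e₂) :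
    IStab P V (e₁ * e₂) := fun n x hx => by
  rw [mul_f_apply]; exact h₁ n _ (h₂ n x hx)

lemma istab_add {e₁ e₂ : End V.M} (h₁ : IStab P V e₁) (h₂ : IStab P V e₂) :
    IStab P V (e₁ + e₂) := fun n x hx => by
  rw [HomologicalComplex.add_f_apply]; exact add_mem (h₁ n x hx) (h₂ n x hx)

lemma istab_sub {e₁ e₂ : End V.M} (h₁ : IStab P V e₁) (h₂ : IStab P V e₂) :
    IStab P V (e₁ - e₂) := fun n x hx => by
  rw [HomologicalComplex.sub_f_apply]; exact sub_mem (h₁ n x hx) (h₂ n x hx)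

lemma istab_smul (c : k) {e : End V.M} (h : IStab P V e) : IStab P V (c • e) := fun n x hx => by
  rw [HomologicalComplex.smul_f_apply]
  exact Submodule.smul_mem _ c (h n x hx)

/-- The invariants subcomplex `M^𝔨`. -/
def R : CochainComplex (ModuleCat.{0} k) ℤ where
  X n := ModuleCat.of k (Isub P V n)
  d i j := ModuleCat.ofHom (LinearMap.restrict (V.M.d i j).hom (Isub_d P V i j))
  shape i j h := by
    refine ModuleCat.hom_ext (LinearMap.ext fun x => ?_)
    refine Subtype.ext ?_
    show V.M.d i j x.val = 0
    rw [V.M.shape i j h]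
    rfl
  d_comp_d' i j l _ _ := by
    refine ModuleCat.hom_ext (LinearMap.ext fun x => ?_)
    refine Subtype.ext ?_
    show V.M.d j l (V.M.d i j x.val) = 0
    exact ConcreteCategory.congr_hom (V.M.d_comp_d i j l) x.val

/-- The inclusion chain map `M^𝔨 ⟶ M`. -/
def incl : R P V ⟶ V.M where
  f n := ModuleCat.ofHom (Isub P V n).subtype
  comm' i j _ := by
    refine ModuleCat.hom_ext (LinearMap.ext fun x => ?_)
    rfl

lemma incl_mono {Z : CochainComplex (ModuleCat.{0} k) ℤ} {f g : Z ⟶ R P V}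
    (h : f ≫ incl P V = g ≫ incl P V) : f = g := by
  apply HomologicalComplex.hom_f_injective
  funext n
  refine ModuleCat.hom_ext (LinearMap.ext fun x => ?_)
  refine Subtype.ext ?_
  exact ConcreteCategory.congr_hom (congrArg (fun φ => HomologicalComplex.Hom.f φ n) h) x

/-- Corestriction of a chain map landing in the invariants. -/
def rlift {Z : CochainComplex (ModuleCat.{0} k) ℤ} (f : Z ⟶ V.M)
    (h : ∀ (n : ℤ) (x : Z.X n), f.f n x ∈ Isub P V n) : Z ⟶ R P V where
  f n := ModuleCat.ofHom (LinearMap.codRestrict (Isub P V n) (f.f n).hom (h n))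
  comm' i j _ := by
    refine ModuleCat.hom_ext (LinearMap.ext fun x => ?_)
    refine Subtype.ext ?_
    show V.M.d i j (f.f i x) = f.f j (Z.d i j x)
    exact ConcreteCategory.congr_hom (f.comm i j) x

lemma rlift_fac {Z : CochainComplex (ModuleCat.{0} k) ℤ} (f : Z ⟶ V.M)
    (h : ∀ (n : ℤ) (x : Z.X n), f.f n x ∈ Isub P V n) :
    rlift P V f h ≫ incl P V = f := by
  apply HomologicalComplex.hom_f_injective
  funext n
  refine ModuleCat.hom_ext (LinearMap.ext fun x => ?_)
  rfl

/-- The induced endomorphism of the invariants. -/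
def rend (e : End V.M) (h : IStab P V e) : End (R P V) :=
  rlift P V (incl P V ≫ (e : V.M ⟶ V.M)) (fun n x => h n x.val x.property)

lemma rend_fac (e : End V.M) (h : IStab P V e) :
    (rend P V e h : R P V ⟶ R P V) ≫ incl P V = incl P V ≫ (e : V.M ⟶ V.M) :=
  rlift_fac P V _ _

lemma rend_unique (e : End V.M) (h : IStab P V e) (t : End (R P V))
    (ht : (t : R P V ⟶ R P V) ≫ incl P V = incl P V ≫ (e : V.M ⟶ V.M)) :
    rend P V e h = t :=
  incl_mono P V (by rw [rend_fac, ht])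

lemma rend_congr {e₁ e₂ : End V.M} {h₁ : IStab P V e₁} {h₂ : IStab P V e₂} (h : e₁ = e₂) :
    rend P V e₁ h₁ = rend P V e₂ h₂ := by subst h; rfl

lemma rend_one : rend P V 1 (istab_one P V) = 1 :=
  rend_unique P V _ _ _ (by
    show 𝟙 (R P V) ≫ incl P V = incl P V ≫ 𝟙 V.M
    simp)

lemma rend_zero (h : IStab P V 0) : rend P V 0 h = 0 :=
  rend_unique P V _ _ _ (by
    show (0 : R P V ⟶ R P V) ≫ incl P V = incl P V ≫ (0 : V.M ⟶ V.M)
    rw [Limits.comp_zero, Limits.zero_comp])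

lemma rend_mul {e₁ e₂ : End V.M} (h₁ : IStab P V e₁) (h₂ : IStab P V e₂) :
    rend P V (e₁ * e₂) (istab_mul P V h₁ h₂) = rend P V e₁ h₁ * rend P V e₂ h₂ :=
  rend_unique P V _ _ _ (by
    show ((rend P V e₂ h₂ : R P V ⟶ R P V) ≫ rend P V e₁ h₁) ≫ incl P V
      = incl P V ≫ ((e₂ : V.M ⟶ V.M) ≫ e₁)
    rw [Category.assoc, rend_fac, ← Category.assoc, rend_fac, Category.assoc])

lemma rend_add {e₁ e₂ : End V.M} (h₁ : IStab P V e₁) (h₂ : IStab P V e₂) :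
    rend P V (e₁ + e₂) (istab_add P V h₁ h₂) = rend P V e₁ h₁ + rend P V e₂ h₂ :=
  rend_unique P V _ _ _ (by
    show ((rend P V e₁ h₁ : R P V ⟶ R P V) + rend P V e₂ h₂) ≫ incl P V
      = incl P V ≫ ((e₁ : V.M ⟶ V.M) + e₂)
    rw [Preadditive.add_comp, Preadditive.comp_add, rend_fac, rend_fac])

lemma rend_sub {e₁ e₂ : End V.M} (h₁ : IStab P V e₁) (h₂ : IStab P V e₂) :
    rend P V (e₁ - e₂) (istab_sub P V h₁ h₂) = rend P V e₁ h₁ - rend P V e₂ h₂ :=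
  rend_unique P V _ _ _ (by
    show ((rend P V e₁ h₁ : R P V ⟶ R P V) - rend P V e₂ h₂) ≫ incl P V
      = incl P V ≫ ((e₁ : V.M ⟶ V.M) - e₂)
    rw [Preadditive.sub_comp, Preadditive.comp_sub, rend_fac, rend_fac])

lemma rend_smul (c : k) {e : End V.M} (h : IStab P V e) :
    rend P V (c • e) (istab_smul P V c h) = c • rend P V e h :=
  rend_unique P V _ _ _ (by
    show (c • (rend P V e h : R P V ⟶ R P V)) ≫ incl P V
      = incl P V ≫ (c • (e : V.M ⟶ V.M))
    rw [Linear.smul_comp, Linear.comp_smul, rend_fac])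

lemma istab_omega (ξ : D.L) : IStab P V (ω P V ξ) :=
  istab_sub P V (istab_dnu P V ξ) (istab_pi P V (P.ψ ξ))

lemma rend_omega (ξ : D.L) : rend P V (ω P V ξ) (istab_omega P V ξ) = 0 :=
  rend_unique P V _ _ _ (by
    show (0 : R P V ⟶ R P V) ≫ incl P V = incl P V ≫ (ω P V ξ : V.M ⟶ V.M)
    rw [Limits.zero_comp]
    apply HomologicalComplex.hom_f_injective
    funext n
    refine ModuleCat.hom_ext (LinearMap.ext fun x => ?_)
    exact ((Isub_mem P V).mp x.property ξ).symm)

end St7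

namespace St7
variable {k : Type} [CommRing k] {D : GroupData k} (P : HCPair D) (V : WeakMod P.toWeakPair)
open CategoryTheory

/-- The invariants weak module `M^𝔨`. -/
def invMod : WeakMod P.toWeakPair where
  M := R P V
  π :=
    { toFun := fun a => rend P V (V.π a) (istab_pi P V a)
      map_one' := by
        have h : rend P V (V.π 1) (istab_pi P V 1) = 1 :=
          (rend_congr P V (map_one V.π)).trans (rend_one P V)
        exact h
      map_mul' := fun a b => by
        have h : rend P V (V.π (a * b)) (istab_pi P V (a * b))
            = rend P V (V.π a) (istab_pi P V a) * rend P V (V.π b) (istab_pi P V b) := by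
          rw [← rend_mul]
          exact rend_congr P V (map_mul V.π a b)
        exact h
      map_zero' := by
        have h : rend P V (V.π 0) (istab_pi P V 0) = 0 :=
          (rend_congr P V (map_zero V.π)).trans (rend_zero P V (istab_zero P V))
        exact h
      map_add' := fun a b => by
        have h : rend P V (V.π (a + b)) (istab_pi P V (a + b))
            = rend P V (V.π a) (istab_pi P V a) + rend P V (V.π b) (istab_pi P V b) := by
          rw [← rend_add]
          exact rend_congr P V (map_add V.π a b)
        exact h
      commutes' := fun c => by
        have h1 : (V.π (algebraMap k P.A c) : End V.M) = c • (1 : End V.M) := by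
          rw [AlgHom.commutes, Algebra.algebraMap_eq_smul_one]
        have h : rend P V (V.π (algebraMap k P.A c)) (istab_pi P V (algebraMap k P.A c))
            = algebraMap k (End (R P V)) c := by
          calc rend P V (V.π (algebraMap k P.A c)) (istab_pi P V (algebraMap k P.A c))
              = rend P V (c • (1 : End V.M)) (istab_smul P V c (istab_one P V)) :=
                rend_congr P V h1
            _ = c • rend P V 1 (istab_one P V) := rend_smul P V c (istab_one P V)
            _ = c • (1 : End (R P V)) := by rw [rend_one]
            _ = algebraMap k (End (R P V)) c := (Algebra.algebraMap_eq_smul_one c).symm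
        exact h }
  ν :=
    { toFun := fun g =>
        { val := rend P V ((V.ν g : End V.M)) (istab_nu P V g)
          inv := rend P V ((V.ν g⁻¹ : End V.M)) (istab_nu P V g⁻¹)
          val_inv := by
            rw [← rend_mul]
            exact (rend_congr P V (by
              rw [← Units.val_mul, ← map_mul, mul_inv_cancel, map_one, Units.val_one])).trans
              (rend_one P V)
          inv_val := by
            rw [← rend_mul]
            exact (rend_congr P V (by
              rw [← Units.val_mul, ← map_mul, inv_mul_cancel, map_one, Units.val_one])).trans
              (rend_one P V) }
      map_one' := by
        apply Units.ext
        show rend P V ((V.ν (1 : D.G) : End V.M)) (istab_nu P V 1) = (1 : End (R P V))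
        exact (rend_congr P V (by rw [map_one, Units.val_one])).trans (rend_one P V)
      map_mul' := fun g h => by
        apply Units.ext
        show rend P V ((V.ν (g * h) : End V.M)) (istab_nu P V (g * h))
          = rend P V ((V.ν g : End V.M)) (istab_nu P V g)
            * rend P V ((V.ν h : End V.M)) (istab_nu P V h)
        rw [← rend_mul]
        exact rend_congr P V (by rw [map_mul, Units.val_mul]) }
  dν :=
    { toFun := fun ξ => rend P V (V.dν ξ) (istab_dnu P V ξ)
      map_add' := fun ξ η => by
        have h : rend P V (V.dν (ξ + η)) (istab_dnu P V (ξ + η))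
            = rend P V (V.dν ξ) (istab_dnu P V ξ) + rend P V (V.dν η) (istab_dnu P V η) := by
          rw [← rend_add]
          exact rend_congr P V (map_add V.dν ξ η)
        exact h
      map_smul' := fun c ξ => by
        have h : rend P V (V.dν (c • ξ)) (istab_dnu P V (c • ξ))
            = c • rend P V (V.dν ξ) (istab_dnu P V ξ) := by
          rw [← rend_smul]
          exact rend_congr P V (map_smul V.dν c ξ)
        exact h }
  dν_lie := fun x y => by
    have h : rend P V (V.dν ⁅x, y⁆) (istab_dnu P V ⁅x, y⁆)
        = rend P V (V.dν x) (istab_dnu P V x) * rend P V (V.dν y) (istab_dnu P V y)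
          - rend P V (V.dν y) (istab_dnu P V y) * rend P V (V.dν x) (istab_dnu P V x) := by
      rw [← rend_mul, ← rend_mul, ← rend_sub]
      exact rend_congr P V (V.dν_lie x y)
    exact h
  π_equiv := fun g a => by
    have h : rend P V ((V.ν g : End V.M)) (istab_nu P V g) * rend P V (V.π a) (istab_pi P V a)
        = rend P V (V.π (P.φ g a)) (istab_pi P V (P.φ g a))
          * rend P V ((V.ν g : End V.M)) (istab_nu P V g) := by
      rw [← rend_mul, ← rend_mul]
      exact rend_congr P V (V.π_equiv g a)
    exact h
  dν_equiv := fun g ξ => by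
    have h : rend P V ((V.ν g : End V.M)) (istab_nu P V g) * rend P V (V.dν ξ) (istab_dnu P V ξ)
        = rend P V (V.dν (D.Ad g ξ)) (istab_dnu P V (D.Ad g ξ))
          * rend P V ((V.ν g : End V.M)) (istab_nu P V g) := by
      rw [← rend_mul, ← rend_mul]
      exact rend_congr P V (V.dν_equiv g ξ)
    exact h
  dν_π := fun ξ a => by
    have h : rend P V (V.dν ξ) (istab_dnu P V ξ) * rend P V (V.π a) (istab_pi P V a)
        = rend P V (V.π (P.dφ ξ a)) (istab_pi P V (P.dφ ξ a))
          + rend P V (V.π a) (istab_pi P V a) * rend P V (V.dν ξ) (istab_dnu P V ξ) := by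
      rw [← rend_mul, ← rend_mul, ← rend_add]
      exact rend_congr P V (V.dν_π ξ a)
    exact h

lemma inv_strict : IsStrict P (invMod P V) := fun ξ => by
  have h2 : rend P V (V.dν ξ) (istab_dnu P V ξ)
      - rend P V (V.π (P.ψ ξ)) (istab_pi P V (P.ψ ξ)) = 0 :=
    ((rend_sub P V (istab_dnu P V ξ) (istab_pi P V (P.ψ ξ))).symm).trans (rend_omega P V ξ)
  have h : rend P V (V.dν ξ) (istab_dnu P V ξ)
      = rend P V (V.π (P.ψ ξ)) (istab_pi P V (P.ψ ξ)) := sub_eq_zero.mp h2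
  exact h

/-- The counit morphism `M^𝔨 ⟶ M` as a morphism of weak modules. -/
def invCounit : WeakMod.Hom (invMod P V) V where
  hom := incl P V
  comm_π a := rend_fac P V (V.π a) (istab_pi P V a)
  comm_ν g := rend_fac P V ((V.ν g : End V.M)) (istab_nu P V g)
  comm_dν ξ := rend_fac P V (V.dν ξ) (istab_dnu P V ξ)

lemma hom_into (f : WeakMod.Hom V (invMod P V)) : True := trivial

lemma hom_lands {S : WeakMod P.toWeakPair} (hS : IsStrict P S) (f : WeakMod.Hom S V)
    (n : ℤ) (x : S.M.X n) : f.hom.f n x ∈ Isub P V n := by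
  rw [Isub_mem]
  intro ξ
  have h : f.hom.f n ((ω P S ξ).f n x) = (ω P V ξ).f n (f.hom.f n x) :=
    hom_congr (hom_omega P S f ξ) n x
  rw [← h, strict_omega P hS ξ, HomologicalComplex.zero_f_apply]
  exact map_zero (f.hom.f n).hom

/-- Corestrict a morphism from a strict module into the invariants. -/
def rdescHom {S : WeakMod P.toWeakPair} (hS : IsStrict P S) (f : WeakMod.Hom S V) :
    WeakMod.Hom S (invMod P V) where
  hom := rlift P V f.hom (hom_lands P V hS f)
  comm_π a := by
    have h : ((S.π a : S.M ⟶ S.M) ≫ rlift P V f.hom (hom_lands P V hS f)) ≫ incl P V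
        = (rlift P V f.hom (hom_lands P V hS f)
            ≫ rend P V (V.π a) (istab_pi P V a)) ≫ incl P V := by
      rw [Category.assoc, Category.assoc, rlift_fac, rend_fac, ← Category.assoc, rlift_fac,
        f.comm_π]
    exact incl_mono P V h
  comm_ν g := by
    have h : (((S.ν g : End S.M) : S.M ⟶ S.M) ≫ rlift P V f.hom (hom_lands P V hS f))
          ≫ incl P V
        = (rlift P V f.hom (hom_lands P V hS f)
            ≫ rend P V ((V.ν g : End V.M)) (istab_nu P V g)) ≫ incl P V := by
      rw [Category.assoc, Category.assoc, rlift_fac, rend_fac, ← Category.assoc, rlift_fac,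
        f.comm_ν]
    exact incl_mono P V h
  comm_dν ξ := by
    have h : ((S.dν ξ : S.M ⟶ S.M) ≫ rlift P V f.hom (hom_lands P V hS f)) ≫ incl P V
        = (rlift P V f.hom (hom_lands P V hS f)
            ≫ rend P V (V.dν ξ) (istab_dnu P V ξ)) ≫ incl P V := by
      rw [Category.assoc, Category.assoc, rlift_fac, rend_fac, ← Category.assoc, rlift_fac,
        f.comm_dν]
    exact incl_mono P V h

@[simp] lemma invCounit_hom : (invCounit P V).hom = incl P V := rfl

@[simp] lemma rdescHom_hom {S : WeakMod P.toWeakPair} (hS : IsStrict P S)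
    (f : WeakMod.Hom S V) :
    (rdescHom P V hS f).hom = rlift P V f.hom (hom_lands P V hS f) := rfl

/-- Hom equivalence exhibiting the invariants as right adjoint to inclusion. -/
def rightEquiv (S : ObjectProperty.FullSubcategory (IsStrict P)) :
    ((ObjectProperty.ι (IsStrict P)).obj S ⟶ V)
      ≃ (S ⟶ (⟨invMod P V, inv_strict P V⟩ : ObjectProperty.FullSubcategory (IsStrict P))) where
  toFun f := ObjectProperty.homMk (rdescHom P V S.property f)
  invFun g := g.hom ≫ (invCounit P V : invMod P V ⟶ V)
  left_inv f := by
    refine WeakMod.Hom.ext ?_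
    simp only [comp_hom, ObjectProperty.homMk_hom, rdescHom_hom, invCounit_hom]
    exact rlift_fac P V f.hom (hom_lands P V S.property f)
  right_inv g := by
    refine InducedCategory.hom_ext (WeakMod.Hom.ext ?_)
    simp only [ObjectProperty.homMk_hom, rdescHom_hom, comp_hom, invCounit_hom]
    refine incl_mono P V ?_
    rw [rlift_fac]
    rfl

@[simp] lemma subcomp_hom {A B C : ObjectProperty.FullSubcategory (IsStrict P)} (f : A ⟶ B) (g : B ⟶ C) :
    (f ≫ g).hom.hom = f.hom.hom ≫ g.hom.hom := rfl

@[simp] lemma inclusion_map_hom {A B : ObjectProperty.FullSubcategory (IsStrict P)} (f : A ⟶ B) :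
    ((ObjectProperty.ι (IsStrict P)).map f) = f.hom := rfl

@[simp] lemma rightEquiv_apply (S : ObjectProperty.FullSubcategory (IsStrict P))
    (f : (ObjectProperty.ι (IsStrict P)).obj S ⟶ V) :
    (rightEquiv P V S) f = ObjectProperty.homMk (rdescHom P V S.property f) := rfl

lemma right_adjoint_exists :
    (ObjectProperty.ι (IsStrict P)).IsLeftAdjoint := by
  have adj := Adjunction.adjunctionOfEquivRight
    (F := ObjectProperty.ι (IsStrict P))
    (G_obj := fun V => (⟨invMod P V, inv_strict P V⟩ : ObjectProperty.FullSubcategory (IsStrict P)))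
    (fun S V => rightEquiv P V S)
    (fun S' S V f g => by
      refine InducedCategory.hom_ext (WeakMod.Hom.ext ?_)
      simp only [rightEquiv_apply, ObjectProperty.homMk_hom, rdescHom_hom, comp_hom,
        subcomp_hom, inclusion_map_hom]
      refine incl_mono P V ?_
      rw [rlift_fac]
      exact ((Category.assoc _ _ _).trans (congrArg (f.hom.hom ≫ ·) (rlift_fac P V _ _))).symm)
  exact adj.isLeftAdjoint

end St7

/-- the inclusion of `(A,K)`-modules into weak `(A,K)`-modules
is both a localization and a colocalization: it admits a left adjoint
`(−)_𝔨 : M ↦ M/N` and a right adjoint `(−)^𝔨 : M ↦ M^𝔨`. -/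
theorem strict_inclusion_reflective_coreflective (P : HCPair D) :
    (ObjectProperty.ι (IsStrict P)).IsRightAdjoint ∧
      (ObjectProperty.ι (IsStrict P)).IsLeftAdjoint :=
  ⟨St7.left_adjoint_exists P, St7.right_adjoint_exists P⟩
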